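/- Suppose a connected k-regular graph on n vertices has spectrum {[k]^1, [−1]^1, [α]^{(n−2)/2}, [β]^{(n−2)/2}} with α, β irrational of the form (a ± √b)/2, a, b ∈ ℤ, b > 0. Then the trace equations force n = 2k, α = (−1+√(2k+1))/2 and β = (−1−√(2k+1))/2. -/

import Mathlib

open Polynomial

noncomputable def adjm {V : Type*} [Fintype V] [DecidableEq V] (G : SimpleGraph V) :
    Matrix V V ℝ :=
  @SimpleGraph.adjMatrix ℝ V G (Classical.decRel _) _ _

/-- The adjacency spectrum of `G`, as a multiset of real roots of the
characteristic polynomial (so multiplicities are counted). -/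
noncomputable def spec {V : Type*} [Fintype V] [DecidableEq V] (G : SimpleGraph V) :
    Multiset ℝ :=
  (adjm G).charpoly.roots

/-- `G` is `k`-regular: every vertex has exactly `k` neighbours. -/
def IsReg {V : Type*} (G : SimpleGraph V) (k : ℕ) : Prop :=
  ∀ v : V, (G.neighborSet v).ncard = k
section AuxSpectral

open Matrix

variable {N : Type*} [Fintype N] [DecidableEq N]

lemma charpoly_diag (d : N → ℝ) :
    (Matrix.diagonal d).charpoly = ∏ i, (X - C (d i)) := by
  have h : charmatrix (Matrix.diagonal d)
      = Matrix.diagonal (fun i => (X : ℝ[X]) - C (d i)) := by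
    ext i j
    by_cases h : i = j <;>
      simp [charmatrix_apply, Matrix.diagonal_apply, h]
  rw [Matrix.charpoly, h, Matrix.det_diagonal]

lemma herm_charpoly {A : Matrix N N ℝ} (hA : A.IsHermitian) :
    A.charpoly = ∏ i, (X - C (hA.eigenvalues i)) := by
  classical
  set U : Matrix N N ℝ := (hA.eigenvectorUnitary : Matrix N N ℝ) with hUdef
  have hUr : U * star U = 1 := (Matrix.mem_unitaryGroup_iff).mp (hA.eigenvectorUnitary).2
  have hD : (RCLike.ofReal ∘ hA.eigenvalues : N → ℝ) = hA.eigenvalues := by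
    funext i; simp
  have hsp : A = U * Matrix.diagonal hA.eigenvalues * star U := by
    have := hA.spectral_theorem
    rw [hD] at this
    exact this
  set Cm : Matrix N N ℝ →+* Matrix N N ℝ[X] := (C : ℝ →+* ℝ[X]).mapMatrix with hCm
  have hcm : charmatrix A
      = Cm U * charmatrix (Matrix.diagonal hA.eigenvalues) * Cm (star U) := by
    rw [charmatrix, charmatrix, mul_sub, sub_mul]
    congr 1
    · have hcomm : Cm U * Matrix.scalar N (X : ℝ[X]) = Matrix.scalar N X * Cm U :=
        ((Matrix.scalar_commute (X : ℝ[X]) (Commute.all X) (Cm U)).eq).symm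
      rw [hcomm, mul_assoc, ← _root_.map_mul, hUr, _root_.map_one, mul_one]
    · show (C : ℝ →+* ℝ[X]).mapMatrix A = _
      rw [← _root_.map_mul, ← _root_.map_mul, ← hsp]
  have hdet : A.charpoly = (Matrix.diagonal hA.eigenvalues).charpoly := by
    rw [Matrix.charpoly, Matrix.charpoly, hcm, Matrix.det_mul, Matrix.det_mul]
    have : Cm U * Cm (star U) = 1 := by rw [← _root_.map_mul, hUr, _root_.map_one]
    calc (Cm U).det * (charmatrix (Matrix.diagonal hA.eigenvalues)).det * (Cm (star U)).det
        = (charmatrix (Matrix.diagonal hA.eigenvalues)).det * ((Cm U).det * (Cm (star U)).det) := by ring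
      _ = _ := by rw [← Matrix.det_mul, this, Matrix.det_one, mul_one]
  rw [hdet, charpoly_diag]

lemma herm_trace {A : Matrix N N ℝ} (hA : A.IsHermitian) :
    A.trace = ∑ i, hA.eigenvalues i := by
  classical
  set U : Matrix N N ℝ := (hA.eigenvectorUnitary : Matrix N N ℝ) with hUdef
  have hUl : star U * U = 1 := (Matrix.mem_unitaryGroup_iff').mp (hA.eigenvectorUnitary).2
  have hD : (RCLike.ofReal ∘ hA.eigenvalues : N → ℝ) = hA.eigenvalues := by
    funext i; simp
  have hsp : A = U * Matrix.diagonal hA.eigenvalues * star U := by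
    have := hA.spectral_theorem; rw [hD] at this; exact this
  conv_lhs => rw [hsp]
  rw [Matrix.trace_mul_comm, ← mul_assoc, hUl, one_mul, Matrix.trace_diagonal]

lemma herm_trace_sq {A : Matrix N N ℝ} (hA : A.IsHermitian) :
    (A * A).trace = ∑ i, hA.eigenvalues i * hA.eigenvalues i := by
  classical
  set U : Matrix N N ℝ := (hA.eigenvectorUnitary : Matrix N N ℝ) with hUdef
  have hUr : U * star U = 1 := (Matrix.mem_unitaryGroup_iff).mp (hA.eigenvectorUnitary).2
  have hUl : star U * U = 1 := by
    exact (Matrix.mem_unitaryGroup_iff').mp (hA.eigenvectorUnitary).2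
  have hD : (RCLike.ofReal ∘ hA.eigenvalues : N → ℝ) = hA.eigenvalues := by
    funext i; simp
  have hsp : A = U * Matrix.diagonal hA.eigenvalues * star U := by
    have := hA.spectral_theorem; rw [hD] at this; exact this
  have : A * A = U * Matrix.diagonal (fun i => hA.eigenvalues i * hA.eigenvalues i) * star U := by
    conv_lhs => rw [hsp]
    rw [← Matrix.diagonal_mul_diagonal]
    calc U * Matrix.diagonal hA.eigenvalues * star U * (U * Matrix.diagonal hA.eigenvalues * star U)
        = U * Matrix.diagonal hA.eigenvalues * (star U * U) * Matrix.diagonal hA.eigenvalues * star U := by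
          simp only [mul_assoc]
      _ = _ := by rw [hUl, mul_one]; simp only [mul_assoc]
  rw [this, Matrix.trace_mul_comm, ← mul_assoc, hUl, one_mul, Matrix.trace_diagonal]

lemma herm_roots {A : Matrix N N ℝ} (hA : A.IsHermitian) :
    A.charpoly.roots = Finset.univ.val.map hA.eigenvalues := by
  rw [herm_charpoly hA]
  have h : ∏ i, (X - C (hA.eigenvalues i))
      = ((Finset.univ.val.map hA.eigenvalues).map fun r => X - C r).prod := by
    rw [Multiset.map_map]; rfl
  rw [h, roots_multiset_prod_X_sub_C]


end AuxSpectral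


/-- If a connected `k`-regular graph on `n` vertices has spectrum
`{[k]^1, [-1]^1, [α]^{(n-2)/2}, [β]^{(n-2)/2}}` with `α, β` irrational of the form
`(a ± √b)/2`, `a, b ∈ ℤ`, `b > 0`, then `n = 2k`, `α = (-1+√(2k+1))/2` and
`β = (-1-√(2k+1))/2`. -/
theorem stmt_12 {n k : ℕ} (G : SimpleGraph (Fin n))
    (hconn : G.Connected) (hreg : IsReg G k)
    (hk1 : 1 < k) (hk2 : k < n - 1)
    (a b : ℤ) (hb : 0 < b) (al be : ℝ)
    (hal : al = ((a : ℝ) + Real.sqrt b) / 2)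
    (hbe : be = ((a : ℝ) - Real.sqrt b) / 2)
    (hirr1 : Irrational al) (hirr2 : Irrational be)
    (hspec : spec G = {(k : ℝ), (-1 : ℝ)} + Multiset.replicate ((n - 2) / 2) al +
      Multiset.replicate ((n - 2) / 2) be) :
    n = 2 * k ∧
    al = (-1 + Real.sqrt (2 * k + 1)) / 2 ∧
    be = (-1 - Real.sqrt (2 * k + 1)) / 2 := by
  classical
  set m : ℕ := (n - 2) / 2 with hm
  set A : Matrix (Fin n) (Fin n) ℝ := adjm G with hAdef
  have hH : A.IsHermitian := by
    rw [Matrix.IsHermitian]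
    ext i j
    simp [hAdef, adjm, Matrix.conjTranspose_apply, SimpleGraph.adj_comm]
  have hroots : spec G = Finset.univ.val.map hH.eigenvalues := herm_roots hH
  -- cardinality
  have hcard : n = 2 + m + m := by
    have h1 : Multiset.card (spec G) = n := by
      rw [hroots]; simp
    have h2 : Multiset.card (spec G) = 2 + m + m := by
      rw [hspec]; simp [Multiset.insert_eq_cons]; omega
    omega
  -- trace equation 1
  have htr0 : A.trace = 0 := by
    simp [hAdef, adjm]
  have hsum0 : (spec G).sum = 0 := by
    rw [hroots]
    exact (herm_trace hH).symm.trans htr0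
  have e1 : (k : ℝ) + (-1) + m * al + m * be = 0 := by
    rw [hspec] at hsum0
    simp [Multiset.insert_eq_cons, Multiset.sum_replicate, nsmul_eq_mul] at hsum0
    linarith
  -- trace equation 2
  have hdeg : ∀ v : Fin n, (A * A) v v = (k : ℝ) := by
    intro v
    have hd : (G.neighborFinset v).card = k := by
      rw [SimpleGraph.neighborFinset, ← Set.ncard_eq_toFinset_card']
      exact hreg v
    rw [hAdef]
    show (adjm G * adjm G) v v = (k : ℝ)
    rw [adjm, SimpleGraph.adjMatrix_mul_self_apply_self]
    rw [SimpleGraph.degree]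
    norm_cast
  have htr2 : (A * A).trace = (n : ℝ) * k := by
    have : (A * A).trace = ∑ v : Fin n, (A * A) v v := rfl
    rw [this]
    simp [hdeg, Finset.sum_const, Finset.card_univ, nsmul_eq_mul]
  have hsq0 : ((spec G).map fun x => x * x).sum = (n : ℝ) * k := by
    rw [hroots, Multiset.map_map]
    exact (herm_trace_sq hH).symm.trans htr2
  have e2 : (k : ℝ) * k + 1 + m * (al * al) + m * (be * be) = (n : ℝ) * k := by
    rw [hspec] at hsq0
    simp [Multiset.insert_eq_cons, Multiset.sum_replicate, nsmul_eq_mul] at hsq0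
    linarith
  -- algebra
  have hs : Real.sqrt b * Real.sqrt b = (b : ℝ) :=
    Real.mul_self_sqrt (by positivity)
  have hab : al + be = (a : ℝ) := by rw [hal, hbe]; ring
  have hab2 : al * al + be * be = ((a : ℝ) ^ 2 + b) / 2 := by
    rw [hal, hbe]; linear_combination hs / 2
  have e1' : (m : ℝ) * a = 1 - k := by linear_combination e1 - (m : ℝ) * hab
  have ht1 : (m : ℤ) * a = 1 - k := by exact_mod_cast e1'
  have hmZ : (1 : ℤ) ≤ m := by
    have : 1 ≤ m := by omega
    exact_mod_cast this
  have hkZ : (2 : ℤ) ≤ k := by exact_mod_cast hk1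
  have hk2Z : (k : ℤ) < 2 * m + 1 := by
    have h : k < 2 * m + 1 := by omega
    exact_mod_cast h
  have ha : a = -1 := by
    have h0 : a < 0 := by
      by_contra h; push_neg at h
      nlinarith [mul_nonneg (by omega : (0:ℤ) ≤ (m:ℤ)) h]
    have h2 : -2 < a := by
      by_contra h; push_neg at h
      nlinarith [mul_le_mul_of_nonneg_left h (by omega : (0:ℤ) ≤ (m:ℤ))]
    omega
  have hmk : (m : ℤ) = k - 1 := by
    have := ht1; rw [ha, mul_neg_one] at this; linarith
  have hn2k : n = 2 * k := by
    have hmn : m + 1 = k := by exact_mod_cast (by linarith : (m:ℤ) + 1 = k)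
    omega
  have hmR : (m : ℝ) = (k : ℝ) - 1 := by exact_mod_cast hmk
  have haR : (a : ℝ) = -1 := by rw [ha]; norm_num
  have hnR : (n : ℝ) = 2 * k := by exact_mod_cast hn2k
  have hkne : (k : ℝ) - 1 ≠ 0 := by
    have : (2 : ℝ) ≤ k := by exact_mod_cast hk1
    linarith
  have es : al * al + be * be = (1 + (b : ℝ)) / 2 := by
    rw [hab2, haR]; norm_num
  have e2' : (k : ℝ) * k + 1 + ((k : ℝ) - 1) * ((1 + (b : ℝ)) / 2) = 2 * k * k := by
    linear_combination e2 - (m : ℝ) * es - ((1 + (b : ℝ)) / 2) * hmR + (k : ℝ) * hnR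
  have key : ((k : ℝ) - 1) * (1 + (b : ℝ)) = ((k : ℝ) - 1) * (2 * (k : ℝ) + 2) := by
    linear_combination 2 * e2'
  have hbR : (b : ℝ) = 2 * (k : ℝ) + 1 := by
    have := mul_left_cancel₀ hkne key
    linarith
  refine ⟨hn2k, ?_, ?_⟩
  · rw [hal, haR, hbR]
  · rw [hbe, haR, hbR]
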